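/- (Injectivity of the LE sum-pooling.) Let N ≥ 2, D ≥ 1, and K₁ = N(N−1)(D−1)/2 + 1. Let w_1,…,w_{K₁} ∈ ℝ^D be such that every subset of D of them is linearly independent. For i ∈ {1,…,D}, j ∈ {1,…,K₁}, p ∈ {1,…,N} and q ∈ {1,…,p+1}, define v_{i,j,p,q} = (q−1)·e_i + (p−q+1)·w_j ∈ ℝ^D, where e_i is the i-th canonical basis vector. If X, X' ∈ ℝ^{N×D} satisfy Σ_{n=1}^N exp(⟨v_{i,j,p,q}, x^{(n)}⟩) = Σ_{n=1}^N exp(⟨v_{i,j,p,q}, x'^{(n)}⟩) for all such (i, j, p, q), then there exists a permutation σ of {1,…,N} with x'^{(σ(n))} = x^{(n)} for all n (i.e., X ~ X'). -/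

import Mathlib

open Finset

private lemma exists_perm_of_map_eq : ∀ {N : ℕ} (z z' : Fin N → ℝ),
    Multiset.map z Finset.univ.val = Multiset.map z' Finset.univ.val →
    ∃ σ : Equiv.Perm (Fin N), ∀ n, z' (σ n) = z n := by
  intro N
  induction N with
  | zero => exact fun z z' _ => ⟨1, fun n => n.elim0⟩
  | succ N ih =>
    intro z z' hm
    have h0 : z 0 ∈ Multiset.map z' Finset.univ.val := by
      rw [← hm]
      exact Multiset.mem_map_of_mem _ (Finset.mem_val.mpr (Finset.mem_univ _))
    obtain ⟨m, -, hm0⟩ := Multiset.mem_map.mp h0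
    have hswap : ∀ (f : Fin (N+1) → ℝ) (e : Equiv.Perm (Fin (N+1))),
        Multiset.map (f ∘ e) Finset.univ.val = Multiset.map f Finset.univ.val := by
      intro f e
      conv_rhs => rw [← Finset.map_univ_equiv e]
      rw [Finset.map_val, Multiset.map_map]
      rfl
    have hdec : ∀ f : Fin (N+1) → ℝ,
        Multiset.map f Finset.univ.val = f 0 ::ₘ Multiset.map (f ∘ Fin.succ) Finset.univ.val := by
      intro f
      rw [Fin.univ_succ, Finset.cons_val, Multiset.map_cons, Finset.map_val, Multiset.map_map]
      rfl
    set z'' : Fin (N+1) → ℝ := z' ∘ (Equiv.swap 0 m) with hz''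
    have hz''0 : z'' 0 = z 0 := by
      simp only [hz'', Function.comp_apply, Equiv.swap_apply_left]
      exact hm0
    have h1 : Multiset.map z Finset.univ.val = Multiset.map z'' Finset.univ.val := by
      rw [hm, hswap z' (Equiv.swap 0 m)]
    rw [hdec z, hdec z'', hz''0] at h1
    have hm' := (Multiset.cons_inj_right (z 0)).mp h1
    obtain ⟨τ, hτ⟩ := ih (z ∘ Fin.succ) (z'' ∘ Fin.succ) hm'
    refine ⟨(Equiv.Perm.decomposeFin.symm (0, τ)).trans (Equiv.swap 0 m), fun n => ?_⟩
    refine Fin.cases ?_ (fun k => ?_) n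
    · simp only [Equiv.trans_apply, Equiv.Perm.decomposeFin_symm_apply_zero,
        Equiv.swap_apply_left]
      exact hm0
    · have hk := hτ k
      simp only [Function.comp_apply] at hk
      simp only [Equiv.trans_apply, Equiv.Perm.decomposeFin_symm_apply_succ,
        Equiv.swap_self, Equiv.refl_apply]
      exact hk

private lemma perm_of_powsum (N : ℕ) (z z' : Fin N → ℝ)
    (h : ∀ p, 1 ≤ p → p ≤ N → ∑ n, z n ^ p = ∑ n, z' n ^ p) :
    ∃ σ : Equiv.Perm (Fin N), ∀ n, z' (σ n) = z n := by
  apply exists_perm_of_map_eq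
  have hcard : ∀ f : Fin N → ℝ, Multiset.card (Multiset.map f Finset.univ.val) = N := by
    intro f; simp
  have newton : ∀ (f : Fin N → ℝ) (k : ℕ),
      (k : ℝ) * (Multiset.map f Finset.univ.val).esymm k =
        (-1) ^ (k + 1) * ∑ a ∈ Finset.filter (fun a => a.1 < k) (Finset.HasAntidiagonal.antidiagonal k),
          (-1) ^ a.1 * (Multiset.map f Finset.univ.val).esymm a.1 * ∑ n, f n ^ a.2 := by
    intro f k
    have h0 := congrArg (MvPolynomial.aeval f) (MvPolynomial.mul_esymm_eq_sum (Fin N) ℝ k)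
    simpa [MvPolynomial.psum, map_sum, map_mul, map_pow, map_natCast, map_neg, map_one,
      MvPolynomial.aeval_esymm_eq_multiset_esymm] using h0
  have hesymm : ∀ k, k ≤ N →
      (Multiset.map z Finset.univ.val).esymm k = (Multiset.map z' Finset.univ.val).esymm k := by
    intro k
    induction k using Nat.strong_induction_on with
    | _ k ih =>
      intro hkN
      rcases Nat.eq_zero_or_pos k with rfl | hk
      · simp [Multiset.esymm]
      · have h1 := newton z k
        have h2 := newton z' k
        have hsum : ∑ a ∈ Finset.filter (fun a => a.1 < k) (Finset.HasAntidiagonal.antidiagonal k),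
            (-1:ℝ) ^ a.1 * (Multiset.map z Finset.univ.val).esymm a.1 * ∑ n, z n ^ a.2
            = ∑ a ∈ Finset.filter (fun a => a.1 < k) (Finset.HasAntidiagonal.antidiagonal k),
            (-1:ℝ) ^ a.1 * (Multiset.map z' Finset.univ.val).esymm a.1 * ∑ n, z' n ^ a.2 := by
          refine Finset.sum_congr rfl fun a ha => ?_
          rw [Finset.mem_filter, Finset.HasAntidiagonal.mem_antidiagonal] at ha
          rw [ih a.1 ha.2 (by omega), h a.2 (by omega) (by omega)]
        have hkk : (k:ℝ) * (Multiset.map z Finset.univ.val).esymm k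
            = (k:ℝ) * (Multiset.map z' Finset.univ.val).esymm k := by
          rw [h1, h2, hsum]
        exact mul_left_cancel₀ (Nat.cast_ne_zero.mpr (by omega)) hkk
  have hP : (Multiset.map (fun r => Polynomial.X - Polynomial.C r)
        (Multiset.map z Finset.univ.val)).prod
      = (Multiset.map (fun r => Polynomial.X - Polynomial.C r)
        (Multiset.map z' Finset.univ.val)).prod := by
    apply Polynomial.ext
    intro k
    by_cases hk : k ≤ N
    · rw [Multiset.prod_X_sub_C_coeff _ (by rw [hcard]; exact hk),
        Multiset.prod_X_sub_C_coeff _ (by rw [hcard]; exact hk), hcard, hcard,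
        hesymm (N - k) (Nat.sub_le _ _)]
    · rw [Polynomial.coeff_eq_zero_of_natDegree_lt, Polynomial.coeff_eq_zero_of_natDegree_lt] <;>
        · rw [Polynomial.natDegree_multiset_prod_X_sub_C_eq_card, hcard]; omega
  have hroots := congrArg Polynomial.roots hP
  rwa [Polynomial.roots_multiset_prod_X_sub_C, Polynomial.roots_multiset_prod_X_sub_C] at hroots

private lemma perm_of_powsum2 (N : ℕ) (z y z' y' : Fin N → ℝ)
    (h : ∀ r s : ℕ, 1 ≤ r + s → r + s ≤ N →
      ∑ n, z n ^ r * y n ^ s = ∑ n, z' n ^ r * y' n ^ s) :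
    ∃ σ : Equiv.Perm (Fin N), ∀ n, z' (σ n) = z n ∧ y' (σ n) = y n := by
  classical
  have expand : ∀ (t : ℝ) (u v : Fin N → ℝ) (p : ℕ),
      ∑ n, (u n + t * v n) ^ p
        = ∑ m ∈ Finset.range (p + 1),
            (t ^ (p - m) * (p.choose m : ℝ)) * ∑ n, u n ^ m * v n ^ (p - m) := by
    intro t u v p
    calc ∑ n, (u n + t * v n) ^ p
        = ∑ n, ∑ m ∈ Finset.range (p + 1), u n ^ m * (t * v n) ^ (p - m) * (p.choose m : ℝ) :=
          Finset.sum_congr rfl fun n _ => add_pow (u n) (t * v n) p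
      _ = ∑ m ∈ Finset.range (p + 1), ∑ n, u n ^ m * (t * v n) ^ (p - m) * (p.choose m : ℝ) :=
          Finset.sum_comm
      _ = ∑ m ∈ Finset.range (p + 1),
            (t ^ (p - m) * (p.choose m : ℝ)) * ∑ n, u n ^ m * v n ^ (p - m) := by
          refine Finset.sum_congr rfl fun m _ => ?_
          rw [Finset.mul_sum]
          refine Finset.sum_congr rfl fun n _ => ?_
          rw [mul_pow]; ring
  have ht : ∀ t : ℝ, ∀ p, 1 ≤ p → p ≤ N →
      ∑ n, (z n + t * y n) ^ p = ∑ n, (z' n + t * y' n) ^ p := by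
    intro t p hp1 hpN
    rw [expand, expand]
    refine Finset.sum_congr rfl fun m hm => ?_
    rw [Finset.mem_range] at hm
    rw [h m (p - m) (by omega) (by omega)]
  set S : Finset (ℝ × ℝ) := (Finset.univ.image fun n => (z n, y n))
      ∪ (Finset.univ.image fun n => (z' n, y' n)) with hS
  obtain ⟨t, htB⟩ := Infinite.exists_notMem_finset
    ((S ×ˢ S).image fun P => (P.2.1 - P.1.1) / (P.1.2 - P.2.2))
  have hinj : ∀ P ∈ S, ∀ Q ∈ S, P.1 + t * P.2 = Q.1 + t * Q.2 → P = Q := by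
    intro P hP Q hQ he
    by_cases h2 : P.2 = Q.2
    · have h1 : P.1 = Q.1 := by rw [h2] at he; linarith
      exact Prod.ext h1 h2
    · exfalso
      refine htB (Finset.mem_image.mpr ⟨(P, Q), Finset.mem_product.mpr ⟨hP, hQ⟩, ?_⟩)
      have hne : P.2 - Q.2 ≠ 0 := sub_ne_zero.mpr h2
      field_simp
      linarith
  obtain ⟨σ, hσ⟩ := perm_of_powsum N (fun n => z n + t * y n) (fun n => z' n + t * y' n) (ht t)
  refine ⟨σ, fun n => ?_⟩
  have hmem1 : ((z' (σ n), y' (σ n)) : ℝ × ℝ) ∈ S :=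
    Finset.mem_union_right _ (Finset.mem_image.mpr ⟨σ n, Finset.mem_univ _, rfl⟩)
  have hmem2 : ((z n, y n) : ℝ × ℝ) ∈ S :=
    Finset.mem_union_left _ (Finset.mem_image.mpr ⟨n, Finset.mem_univ _, rfl⟩)
  have hPQ := hinj _ hmem1 _ hmem2 (hσ n)
  exact ⟨congrArg Prod.fst hPQ, congrArg Prod.snd hPQ⟩

private lemma ortho_card {D K : ℕ} (w : Fin K → Fin D → ℝ)
    (hw : ∀ s : Finset (Fin K), s.card = D → LinearIndependent ℝ (fun j : s => w j))
    (u : Fin D → ℝ) (hu : u ≠ 0) :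
    (Finset.univ.filter fun j => ∑ d, w j d * u d = 0).card ≤ D - 1 := by
  classical
  by_contra hc
  push_neg at hc
  rcases Nat.eq_zero_or_pos D with rfl | hD1
  · exact hu (funext fun d => d.elim0)
  have hDle : D ≤ (Finset.univ.filter fun j => ∑ d, w j d * u d = 0).card := by omega
  obtain ⟨s, hs_sub, hs_card⟩ := Finset.exists_subset_card_eq hDle
  have hne : Nonempty s := by
    have : 0 < s.card := by omega
    obtain ⟨x, hx⟩ := Finset.card_pos.mp this
    exact ⟨⟨x, hx⟩⟩
  have hsp := (hw s hs_card).span_eq_top_of_card_eq_finrank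
    (by rw [Fintype.card_coe, hs_card, Module.finrank_fintype_fun_eq_card, Fintype.card_fin])
  have humem : u ∈ Submodule.span ℝ (Set.range fun j : s => w j) := by rw [hsp]; trivial
  obtain ⟨c, hcu⟩ := Submodule.mem_span_range_iff_exists_fun ℝ |>.mp humem
  have hz : ∀ j : s, ∑ d, w (j : Fin K) d * u d = 0 := by
    intro j
    have hmem := hs_sub j.2
    exact (Finset.mem_filter.mp hmem).2
  have h0 : ∑ d, u d * u d = 0 := by
    calc ∑ d, u d * u d = ∑ d, (∑ j : s, c j * w (j : Fin K) d) * u d := by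
          refine Finset.sum_congr rfl fun d _ => ?_
          congr 1
          have hfd := congrFun hcu d
          simpa [Finset.sum_apply, Pi.smul_apply, smul_eq_mul] using hfd.symm
      _ = ∑ j : s, c j * ∑ d, w (j : Fin K) d * u d := by
          simp_rw [Finset.sum_mul]
          rw [Finset.sum_comm]
          refine Finset.sum_congr rfl fun j _ => ?_
          rw [Finset.mul_sum]
          exact Finset.sum_congr rfl fun d _ => by ring
      _ = 0 := by simp [hz]
  refine hu (funext fun d => ?_)
  have hd := (Finset.sum_eq_zero_iff_of_nonneg
    (fun d _ => mul_self_nonneg (u d))).mp h0 d (Finset.mem_univ d)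
  exact mul_self_eq_zero.mp hd

private lemma good_dir {N D K : ℕ} (w : Fin K → Fin D → ℝ)
    (hw : ∀ s : Finset (Fin K), s.card = D → LinearIndependent ℝ (fun j : s => w j))
    (X : Fin N → Fin D → ℝ) (hK : N * (N - 1) / 2 * (D - 1) < K) :
    ∃ j, ∀ n m, (∑ d, w j d * X n d) = (∑ d, w j d * X m d) → X n = X m := by
  classical
  set Bad : Finset (Fin K) := Finset.univ.filter (fun j => ∃ p : Fin N × Fin N,
    p.1 < p.2 ∧ X p.1 ≠ X p.2 ∧ ∑ d, w j d * (X p.1 d - X p.2 d) = 0) with hBad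
  set Pairs : Finset (Fin N × Fin N) :=
    Finset.univ.filter (fun p => p.1 < p.2 ∧ X p.1 ≠ X p.2) with hPairsDef
  have hsub : Bad ⊆ Pairs.biUnion (fun p =>
      Finset.univ.filter (fun j => ∑ d, w j d * (X p.1 d - X p.2 d) = 0)) := by
    intro j hj
    obtain ⟨-, p, h1, h2, h3⟩ := Finset.mem_filter.mp hj
    exact Finset.mem_biUnion.mpr ⟨p, Finset.mem_filter.mpr ⟨Finset.mem_univ _, h1, h2⟩,
      Finset.mem_filter.mpr ⟨Finset.mem_univ _, h3⟩⟩
  have hcardB : ∀ p : Fin N × Fin N, X p.1 ≠ X p.2 →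
      (Finset.univ.filter (fun j => ∑ d, w j d * (X p.1 d - X p.2 d) = 0)).card ≤ D - 1 := by
    intro p hp
    refine ortho_card w hw _ (fun hzero => hp (funext fun d => ?_))
    have := congrFun hzero d
    simpa [sub_eq_zero] using this
  -- bound on the number of pairs
  have hPairs : Pairs.card ≤ N * (N - 1) / 2 := by
    set F : Finset (Fin N × Fin N) := Finset.univ.filter (fun p => p.1 < p.2) with hF
    set G : Finset (Fin N × Fin N) := Finset.univ.filter (fun p => p.2 < p.1) with hG
    have hPF : Pairs ⊆ F := by
      intro p hp
      exact Finset.mem_filter.mpr ⟨Finset.mem_univ _, (Finset.mem_filter.mp hp).2.1⟩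
    have hFG : F.card = G.card := by
      refine Finset.card_nbij' (fun p => (p.2, p.1)) (fun p => (p.2, p.1)) ?_ ?_ ?_ ?_
      · intro p hp
        exact Finset.mem_filter.mpr ⟨Finset.mem_univ _, (Finset.mem_filter.mp hp).2⟩
      · intro p hp
        exact Finset.mem_filter.mpr ⟨Finset.mem_univ _, (Finset.mem_filter.mp hp).2⟩
      · intro p _; rfl
      · intro p _; rfl
    have hdisj : Disjoint F G := by
      rw [Finset.disjoint_left]
      intro p hp hp'
      exact absurd ((Finset.mem_filter.mp hp').2) (not_lt.mpr (le_of_lt (Finset.mem_filter.mp hp).2))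
    have hunion : F ∪ G ⊆ (Finset.univ : Finset (Fin N)).offDiag := by
      intro p hp
      rcases Finset.mem_union.mp hp with hp | hp
      · exact Finset.mem_offDiag.mpr ⟨Finset.mem_univ _, Finset.mem_univ _,
          ne_of_lt (Finset.mem_filter.mp hp).2⟩
      · exact Finset.mem_offDiag.mpr ⟨Finset.mem_univ _, Finset.mem_univ _,
          (ne_of_lt (Finset.mem_filter.mp hp).2).symm⟩
    have h2F : F.card * 2 ≤ N * (N - 1) := by
      have hcu : (F ∪ G).card = F.card + G.card := Finset.card_union_of_disjoint hdisj
      have hle : (F ∪ G).card ≤ ((Finset.univ : Finset (Fin N)).offDiag).card :=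
        Finset.card_le_card hunion
      rw [Finset.offDiag_card, Finset.card_univ, Fintype.card_fin] at hle
      have hNN : N * (N - 1) = N * N - N := by
        rw [← Nat.pred_eq_sub_one, Nat.mul_pred]
      omega
    calc Pairs.card ≤ F.card := Finset.card_le_card hPF
      _ ≤ N * (N - 1) / 2 := by rw [Nat.le_div_iff_mul_le (by norm_num)]; exact h2F
  have hBadcard : Bad.card ≤ N * (N - 1) / 2 * (D - 1) := by
    calc Bad.card ≤ (Pairs.biUnion (fun p =>
          Finset.univ.filter (fun j => ∑ d, w j d * (X p.1 d - X p.2 d) = 0))).card :=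
          Finset.card_le_card hsub
      _ ≤ ∑ p ∈ Pairs, (Finset.univ.filter
            (fun j => ∑ d, w j d * (X p.1 d - X p.2 d) = 0)).card := Finset.card_biUnion_le
      _ ≤ ∑ _p ∈ Pairs, (D - 1) := Finset.sum_le_sum fun p hp =>
            hcardB p (Finset.mem_filter.mp hp).2.2
      _ = Pairs.card * (D - 1) := by rw [Finset.sum_const, smul_eq_mul]
      _ ≤ N * (N - 1) / 2 * (D - 1) := Nat.mul_le_mul_right _ hPairs
  obtain ⟨j, hj⟩ : ∃ j, j ∉ Bad := by
    by_contra hno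
    push_neg at hno
    have : Bad = Finset.univ := Finset.eq_univ_iff_forall.mpr hno
    rw [this, Finset.card_univ, Fintype.card_fin] at hBadcard
    omega
  refine ⟨j, fun n m hnm => ?_⟩
  by_contra hne
  have hdiff : ∑ d, w j d * (X n d - X m d) = 0 := by
    have hsplit : ∑ d, w j d * (X n d - X m d)
        = (∑ d, w j d * X n d) - ∑ d, w j d * X m d := by
      rw [← Finset.sum_sub_distrib]
      exact Finset.sum_congr rfl fun d _ => by ring
    rw [hsplit, hnm, sub_self]
  apply hj
  refine Finset.mem_filter.mpr ⟨Finset.mem_univ _, ?_⟩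
  rcases lt_trichotomy n m with hlt | heq | hgt
  · exact ⟨(n, m), hlt, hne, hdiff⟩
  · exact absurd (by rw [heq]) hne
  · refine ⟨(m, n), hgt, fun hXX => hne hXX.symm, ?_⟩
    have hflip : ∑ d, w j d * (X m d - X n d) = -∑ d, w j d * (X n d - X m d) := by
      rw [← Finset.sum_neg_distrib]
      exact Finset.sum_congr rfl fun d _ => by ring
    rw [hflip, hdiff, neg_zero]

/-- Injectivity of the LE sum-pooling: with weights
`v_{i,j,p,q} = (q−1)·e_i + (p−q+1)·w_j` (where every `D` of the `w_j` are
linearly independent), equality of all the exponential sums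
`∑_n exp⟨v_{i,j,p,q}, x^{(n)}⟩` for `X` and `X'` implies `X ~ X'`. -/
theorem le_injectivity (N D : ℕ) (hN : 2 ≤ N) (hD : 1 ≤ D)
    (w : Fin (N * (N - 1) * (D - 1) / 2 + 1) → Fin D → ℝ)
    (hw : ∀ s : Finset (Fin (N * (N - 1) * (D - 1) / 2 + 1)), s.card = D →
      LinearIndependent ℝ (fun j : s => w j))
    (X X' : Fin N → Fin D → ℝ)
    (h : ∀ (i : Fin D) (j : Fin (N * (N - 1) * (D - 1) / 2 + 1)),
      ∀ p ∈ Finset.Icc 1 N, ∀ q ∈ Finset.Icc 1 (p + 1),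
        ∑ n, Real.exp (∑ d,
            (((q : ℝ) - 1) * (Pi.single i (1 : ℝ) : Fin D → ℝ) d
              + ((p : ℝ) - q + 1) * w j d) * X n d)
          = ∑ n, Real.exp (∑ d,
            (((q : ℝ) - 1) * (Pi.single i (1 : ℝ) : Fin D → ℝ) d
              + ((p : ℝ) - q + 1) * w j d) * X' n d)) :
    ∃ σ : Equiv.Perm (Fin N), ∀ n, X' (σ n) = X n := by
  classical
  have step1 : ∀ (i : Fin D) (j : Fin (N * (N - 1) * (D - 1) / 2 + 1)),
      ∃ σ : Equiv.Perm (Fin N), ∀ n, X' (σ n) i = X n i ∧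
        (∑ d, w j d * X' (σ n) d) = ∑ d, w j d * X n d := by
    intro i j
    have hps : ∀ r s : ℕ, 1 ≤ r + s → r + s ≤ N →
        ∑ n, Real.exp (X n i) ^ r * Real.exp (∑ d, w j d * X n d) ^ s
          = ∑ n, Real.exp (X' n i) ^ r * Real.exp (∑ d, w j d * X' n d) ^ s := by
      intro r s h1 h2
      have key : ∀ (Y : Fin N → Fin D → ℝ) (n : Fin N),
          Real.exp (∑ d, ((((r + 1 : ℕ) : ℝ) - 1) * (Pi.single i (1:ℝ) : Fin D → ℝ) d
            + (((r + s : ℕ) : ℝ) - ((r + 1 : ℕ) : ℝ) + 1) * w j d) * Y n d)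
          = Real.exp (Y n i) ^ r * Real.exp (∑ d, w j d * Y n d) ^ s := by
        intro Y n
        have e1 : ∑ d, ((((r + 1 : ℕ) : ℝ) - 1) * (Pi.single i (1:ℝ) : Fin D → ℝ) d
            + (((r + s : ℕ) : ℝ) - ((r + 1 : ℕ) : ℝ) + 1) * w j d) * Y n d
            = (r : ℝ) * Y n i + (s : ℝ) * ∑ d, w j d * Y n d := by
          calc ∑ d, ((((r + 1 : ℕ) : ℝ) - 1) * (Pi.single i (1:ℝ) : Fin D → ℝ) d
                + (((r + s : ℕ) : ℝ) - ((r + 1 : ℕ) : ℝ) + 1) * w j d) * Y n d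
              = ∑ d, ((r : ℝ) * (Pi.single i (1:ℝ) : Fin D → ℝ) d * Y n d
                + (s : ℝ) * (w j d * Y n d)) := by
                push_cast
                exact Finset.sum_congr rfl fun d _ => by ring
            _ = (∑ d, (r : ℝ) * (Pi.single i (1:ℝ) : Fin D → ℝ) d * Y n d)
                + ∑ d, (s : ℝ) * (w j d * Y n d) := Finset.sum_add_distrib
            _ = (r : ℝ) * Y n i + (s : ℝ) * ∑ d, w j d * Y n d := by
                rw [← Finset.mul_sum]
                congr 1
                simp only [Pi.single_apply]
                rw [Finset.sum_eq_single i]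
                · simp
                · intro b _ hb; simp [hb]
                · intro hi; exact absurd (Finset.mem_univ i) hi
        rw [e1, Real.exp_add, Real.exp_nat_mul, Real.exp_nat_mul]
      have hh := h i j (r + s) (Finset.mem_Icc.mpr ⟨h1, h2⟩) (r + 1)
        (Finset.mem_Icc.mpr ⟨by omega, by omega⟩)
      calc ∑ n, Real.exp (X n i) ^ r * Real.exp (∑ d, w j d * X n d) ^ s
          = ∑ n, Real.exp (∑ d, ((((r + 1 : ℕ) : ℝ) - 1) * (Pi.single i (1:ℝ) : Fin D → ℝ) d
              + (((r + s : ℕ) : ℝ) - ((r + 1 : ℕ) : ℝ) + 1) * w j d) * X n d) :=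
            Finset.sum_congr rfl fun n _ => (key X n).symm
        _ = ∑ n, Real.exp (∑ d, ((((r + 1 : ℕ) : ℝ) - 1) * (Pi.single i (1:ℝ) : Fin D → ℝ) d
              + (((r + s : ℕ) : ℝ) - ((r + 1 : ℕ) : ℝ) + 1) * w j d) * X' n d) := by
            exact_mod_cast hh
        _ = ∑ n, Real.exp (X' n i) ^ r * Real.exp (∑ d, w j d * X' n d) ^ s :=
            Finset.sum_congr rfl fun n _ => key X' n
    obtain ⟨σ, hσ⟩ := perm_of_powsum2 N (fun n => Real.exp (X n i))
      (fun n => Real.exp (∑ d, w j d * X n d)) (fun n => Real.exp (X' n i))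
      (fun n => Real.exp (∑ d, w j d * X' n d)) hps
    exact ⟨σ, fun n => ⟨Real.exp_injective (hσ n).1, Real.exp_injective (hσ n).2⟩⟩
  have hKbound : N * (N - 1) / 2 * (D - 1) < N * (N - 1) * (D - 1) / 2 + 1 := by
    have hle : N * (N - 1) / 2 * (D - 1) ≤ N * (N - 1) * (D - 1) / 2 := by
      rw [Nat.le_div_iff_mul_le (by norm_num)]
      calc N * (N - 1) / 2 * (D - 1) * 2 = N * (N - 1) / 2 * 2 * (D - 1) := by ring
        _ ≤ N * (N - 1) * (D - 1) := Nat.mul_le_mul_right _ (Nat.div_mul_le_self _ _)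
    omega
  obtain ⟨j, hj⟩ := good_dir w hw X hKbound
  obtain ⟨σ0, hσ0⟩ := step1 ⟨0, hD⟩ j
  refine ⟨σ0, fun n => ?_⟩
  funext i
  obtain ⟨σi, hσi⟩ := step1 i j
  have h1 : X' (σ0 n) i = X (σi.symm (σ0 n)) i := by
    have := (hσi (σi.symm (σ0 n))).1
    rwa [Equiv.apply_symm_apply] at this
  have h2 : ∑ d, w j d * X (σi.symm (σ0 n)) d = ∑ d, w j d * X n d := by
    have ha := (hσi (σi.symm (σ0 n))).2
    rw [Equiv.apply_symm_apply] at ha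
    exact ha.symm.trans (hσ0 n).2
  rw [h1, hj _ _ h2]
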